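/- In the ring R = ℂ[x_1, …, x_6]/(x_2² − x_1x_3, x_5² − x_4x_6), let P be the ideal generated by the images of x_1 and x_2. Then P is a prime ideal, the localization R_P of R at P is a discrete valuation ring, and, denoting by m the maximal ideal of R_P, the image of x_2 lies in m but not in m², while the image of x_1 lies in m² but not in m³ (that is, the normalized valuation of x_2 is 1 and that of x_1 is 2). -/

import Mathlib

open MvPolynomial

/-- The ideal of `ℂ[x₁,…,x₆]` generated by `x₂² − x₁x₃` and `x₅² − x₄x₆`
(variables are 0-indexed: `X 0 = x₁`, …, `X 5 = x₆`). -/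
noncomputable def I6 : Ideal (MvPolynomial (Fin 6) ℂ) :=
  Ideal.span {X 1 ^ 2 - X 0 * X 2, X 4 ^ 2 - X 3 * X 5}

/-- The ideal `P` of `R = ℂ[x₁,…,x₆]/(x₂² − x₁x₃, x₅² − x₄x₆)` generated by the
images of `x₁` and `x₂`. -/
noncomputable def P12 : Ideal (MvPolynomial (Fin 6) ℂ ⧸ I6) :=
  Ideal.span {Ideal.Quotient.mk I6 (X 0), Ideal.Quotient.mk I6 (X 1)}

set_option linter.unusedSectionVars false
set_option linter.unusedVariables false
set_option maxHeartbeats 1000000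

namespace Stmt12Aux


variable {A : Type*} [CommRing A] [IsDomain A]

/-- "c has no square root in the fraction field". -/
def NS (c : A) : Prop := ∀ a b : A, a ^ 2 = c * b ^ 2 → b = 0

lemma NS.ne_zero {c : A} (h : NS c) : c ≠ 0 := by
  intro rfl0
  have := h 0 1 (by simp [rfl0])
  simp at this

/-- The quadratic `X² - c`. -/
noncomputable def quad (c : A) : Polynomial A := Polynomial.X ^ 2 - Polynomial.C c

lemma quad_monic (c : A) : (quad c).Monic := Polynomial.monic_X_pow_sub_C c (by norm_num)

lemma quad_degree (c : A) : (quad c).degree = 2 := by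
  simpa [quad] using Polynomial.degree_X_pow_sub_C (by norm_num : 0 < 2) c

lemma root_sq (c : A) :
    (AdjoinRoot.root (quad c)) ^ 2 = AdjoinRoot.of (quad c) c := by
  have h := AdjoinRoot.mk_self (f := quad c)
  rw [quad, map_sub, map_pow, AdjoinRoot.mk_X, AdjoinRoot.mk_C, sub_eq_zero] at h
  exact h

lemma repr2 (c : A) (x : AdjoinRoot (quad c)) :
    ∃ a b : A, x = AdjoinRoot.of (quad c) a + AdjoinRoot.of (quad c) b * AdjoinRoot.root (quad c) := by
  obtain ⟨q, rfl⟩ := AdjoinRoot.mk_surjective x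
  refine ⟨(q %ₘ quad c).coeff 0, (q %ₘ quad c).coeff 1, ?_⟩
  have h1 : AdjoinRoot.mk (quad c) q = AdjoinRoot.mk (quad c) (q %ₘ quad c) := by
    rw [AdjoinRoot.mk_eq_mk]
    exact ⟨q /ₘ quad c, by
      have := Polynomial.modByMonic_add_div q (quad c)
      linear_combination -this⟩
  have hdeg : (q %ₘ quad c).degree ≤ 1 := by
    have := Polynomial.degree_modByMonic_lt q (quad_monic c)
    rw [quad_degree] at this
    exact Order.le_of_lt_succ (by exact_mod_cast this)
  have h2 := Polynomial.eq_X_add_C_of_degree_le_one hdeg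
  rw [h1]
  conv_lhs => rw [h2]
  rw [map_add, map_mul, AdjoinRoot.mk_C, AdjoinRoot.mk_C, AdjoinRoot.mk_X]
  ring_nf

lemma inj2 {c a b : A}
    (h : AdjoinRoot.of (quad c) a + AdjoinRoot.of (quad c) b * AdjoinRoot.root (quad c) = 0) :
    a = 0 ∧ b = 0 := by
  have h' : AdjoinRoot.mk (quad c) (Polynomial.C a + Polynomial.C b * Polynomial.X) = 0 := by
    rw [map_add, map_mul, AdjoinRoot.mk_C, AdjoinRoot.mk_C, AdjoinRoot.mk_X]
    exact h
  rw [AdjoinRoot.mk_eq_zero] at h'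
  by_cases hg : (Polynomial.C a + Polynomial.C b * Polynomial.X) = 0
  · constructor
    · have := congrArg (fun p => Polynomial.coeff p 0) hg; simpa using this
    · have := congrArg (fun p => Polynomial.coeff p 1) hg; simpa using this
  · exfalso
    have hd := Polynomial.degree_le_of_dvd h' hg
    rw [quad_degree] at hd
    have : (Polynomial.C a + Polynomial.C b * Polynomial.X).degree ≤ 1 := by
      apply le_trans (Polynomial.degree_add_le _ _)
      simp only [sup_le_iff]
      constructor
      · exact le_trans (Polynomial.degree_C_le) (by norm_num)
      · exact le_trans (Polynomial.degree_mul_le _ _) (by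
          simpa using (add_le_add Polynomial.degree_C_le (le_refl (Polynomial.X : Polynomial A).degree)))
    have := le_trans hd this
    norm_num at this

lemma zero_cases {c a b d e : A} (hc : NS c)
    (h1 : a * d + b * e * c = 0) (h2 : a * e + b * d = 0) :
    (a = 0 ∧ b = 0) ∨ (d = 0 ∧ e = 0) := by
  have hc0 : c ≠ 0 := hc.ne_zero
  have key : d * e * (a ^ 2 - c * b ^ 2) = 0 := by
    linear_combination (a * e) * h1 - (b * e * c) * h2
  rcases mul_eq_zero.mp key with hde | hsq
  · rcases mul_eq_zero.mp hde with hd | he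
    · by_cases he : e = 0
      · exact Or.inr ⟨hd, he⟩
      · left
        rw [hd] at h1 h2
        simp only [mul_zero, add_zero, zero_add] at h1 h2
        have ha : a = 0 := by
          rcases mul_eq_zero.mp h2 with h | h
          exacts [h, absurd h he]
        refine ⟨ha, ?_⟩
        rcases mul_eq_zero.mp h1 with h | h
        · rcases mul_eq_zero.mp h with h' | h'
          exacts [h', absurd h' he]
        · exact absurd h hc0
    · by_cases hd : d = 0
      · exact Or.inr ⟨hd, he⟩
      · left
        rw [he] at h1 h2
        simp only [mul_zero, zero_mul, add_zero, zero_add] at h1 h2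
        have hb : b = 0 := by
          rcases mul_eq_zero.mp h2 with h | h
          exacts [h, absurd h hd]
        refine ⟨?_, hb⟩
        rcases mul_eq_zero.mp h1 with h | h
        exacts [h, absurd h hd]
  · left
    have hb : b = 0 := hc a b (by linear_combination hsq)
    refine ⟨?_, hb⟩
    rw [hb] at hsq
    have : a ^ 2 = 0 := by linear_combination hsq
    exact pow_eq_zero_iff (by norm_num) |>.mp this

theorem domain_quad {c : A} (hc : NS c) : IsDomain (AdjoinRoot (quad c)) := by
  haveI : Nontrivial (AdjoinRoot (quad c)) := by
    refine ⟨1, 0, fun h => ?_⟩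
    have h' : AdjoinRoot.of (quad c) 1 + AdjoinRoot.of (quad c) 0 * AdjoinRoot.root (quad c) = 0 := by
      simpa using h
    simpa using (inj2 h').1
  haveI : NoZeroDivisors (AdjoinRoot (quad c)) := by
    refine ⟨fun {x y} hxy => ?_⟩
    obtain ⟨a, b, rfl⟩ := repr2 c x
    obtain ⟨d, e, rfl⟩ := repr2 c y
    have hprod : AdjoinRoot.of (quad c) (a * d + b * e * c)
        + AdjoinRoot.of (quad c) (a * e + b * d) * AdjoinRoot.root (quad c) = 0 := by
      rw [← hxy]
      simp only [map_add, map_mul]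
      linear_combination (-(AdjoinRoot.of (quad c) b * AdjoinRoot.of (quad c) e)) * root_sq c
    obtain ⟨h1, h2⟩ := inj2 hprod
    rcases zero_cases hc h1 h2 with ⟨ha, hb⟩ | ⟨hd, he⟩
    · left; simp [ha, hb]
    · right; simp [hd, he]
  exact NoZeroDivisors.to_isDomain _

theorem NS_lift {c₁ c₂ : A} (h2 : NS c₂) (h12 : NS (c₁ * c₂)) (htwo : (2 : A) ≠ 0) :
    NS (AdjoinRoot.of (quad c₁) c₂) := by
  intro x y hxy
  obtain ⟨a0, a1, rfl⟩ := repr2 c₁ x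
  obtain ⟨b0, b1, rfl⟩ := repr2 c₁ y
  have hc1 : c₁ ≠ 0 := fun h0 => h12.ne_zero (by rw [h0, zero_mul])
  have hdiff : AdjoinRoot.of (quad c₁) ((a0 ^ 2 + a1 ^ 2 * c₁) - (c₂ * b0 ^ 2 + c₂ * c₁ * b1 ^ 2))
      + AdjoinRoot.of (quad c₁) (2 * a0 * a1 - 2 * c₂ * b0 * b1) * AdjoinRoot.root (quad c₁) = 0 := by
    simp only [map_sub, map_add, map_mul, map_pow, map_ofNat]
    linear_combination hxy
      - (AdjoinRoot.of (quad c₁) a1 ^ 2 - AdjoinRoot.of (quad c₁) c₂ * AdjoinRoot.of (quad c₁) b1 ^ 2) * root_sq c₁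
  obtain ⟨hE1, hE2⟩ := inj2 hdiff
  have E1 : a0 ^ 2 + a1 ^ 2 * c₁ = c₂ * b0 ^ 2 + c₂ * c₁ * b1 ^ 2 := by linear_combination hE1
  have E2 : a0 * a1 = c₂ * b0 * b1 := by
    have : (2 : A) * (a0 * a1 - c₂ * b0 * b1) = 0 := by linear_combination hE2
    rcases mul_eq_zero.mp this with h | h
    · exact absurd h htwo
    · linear_combination h
  have key : (a1 ^ 2 - c₂ * b1 ^ 2) * (c₁ * a1 ^ 2 - c₂ * b0 ^ 2) = 0 := by
    linear_combination (a1 ^ 2) * E1 - (a0 * a1 + c₂ * b0 * b1) * E2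
  have hb01 : b0 = 0 ∧ b1 = 0 := by
    rcases mul_eq_zero.mp key with h | h
    · have hb1 : b1 = 0 := h2 a1 b1 (by linear_combination h)
      have ha1 : a1 = 0 := by
        have : a1 ^ 2 = 0 := by rw [hb1] at h; linear_combination h
        exact pow_eq_zero_iff (by norm_num) |>.mp this
      have hb0 : b0 = 0 := h2 a0 b0 (by rw [ha1, hb1] at E1; linear_combination E1)
      exact ⟨hb0, hb1⟩
    · have hb0 : b0 = 0 := h12 (c₁ * a1) b0 (by linear_combination c₁ * h)
      have ha1 : a1 = 0 := by
        rw [hb0] at h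
        have : c₁ * a1 ^ 2 = 0 := by linear_combination h
        rcases mul_eq_zero.mp this with h' | h'
        · exact absurd h' hc1
        · exact pow_eq_zero_iff (by norm_num) |>.mp h'
      have hb1 : b1 = 0 := h12 a0 b1 (by rw [ha1, hb0] at E1; linear_combination E1)
      exact ⟨hb0, hb1⟩
  rw [hb01.1, hb01.2]
  simp

theorem NS_of_prime [UniqueFactorizationMonoid A] {p d : A} (hp : Prime p) (hpd : ¬ p ∣ d) :
    NS (p * d) := by
  intro a b h
  by_contra hb
  have hd0 : d ≠ 0 := fun h0 => hpd (h0 ▸ dvd_zero p)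
  have hc0 : p * d ≠ 0 := mul_ne_zero hp.ne_zero hd0
  have ha0 : a ≠ 0 := by
    intro h0
    rw [h0] at h
    have : b ^ 2 = 0 := by
      rcases mul_eq_zero.mp ((zero_pow (two_ne_zero)).symm.trans h).symm with h' | h'
      · exact absurd h' hc0
      · exact h'
    exact hb (pow_eq_zero_iff (two_ne_zero) |>.mp this)
  have fa := FiniteMultiplicity.of_prime_left hp ha0
  have fb := FiniteMultiplicity.of_prime_left hp hb
  have fp := FiniteMultiplicity.of_prime_left hp hp.ne_zero
  have hmeq := congrArg (emultiplicity p) h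
  rw [emultiplicity_pow hp, mul_assoc] at hmeq
  rw [emultiplicity_mul hp, emultiplicity_mul hp, emultiplicity_pow hp] at hmeq
  rw [fa.emultiplicity_eq_multiplicity, fb.emultiplicity_eq_multiplicity,
    fp.emultiplicity_self, emultiplicity_eq_zero.mpr hpd] at hmeq
  norm_cast at hmeq
  omega

lemma mv_prime_X {n : ℕ} (i : Fin (n + 1)) :
    Prime (X i : MvPolynomial (Fin (n + 1)) ℂ) := by
  let e : MvPolynomial (Fin (n + 1)) ℂ ≃* Polynomial (MvPolynomial (Fin n) ℂ) :=
    ((renameEquiv ℂ (Equiv.swap i 0)).trans (finSuccEquiv ℂ n)).toMulEquiv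
  rw [← MulEquiv.prime_iff e]
  have he : e (X i) = Polynomial.X := by
    show (finSuccEquiv ℂ n) ((renameEquiv ℂ (Equiv.swap i 0)) (X i)) = Polynomial.X
    rw [renameEquiv_apply, rename_X, Equiv.swap_apply_left, finSuccEquiv_X_zero]
  rw [he]
  exact Polynomial.prime_X

lemma not_X_dvd {n : ℕ} (i : Fin n) (d : MvPolynomial (Fin n) ℂ)
    (hd : eval (fun j => if j = i then 0 else 1) d = 1) : ¬ (X i : MvPolynomial (Fin n) ℂ) ∣ d := by
  rintro ⟨q, hq⟩
  have := congrArg (eval (fun j => if j = i then (0:ℂ) else 1)) hq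
  rw [hd, eval_mul, eval_X] at this
  simp at this

-- concrete instances
lemma NS_c1 : NS (X 0 * X 1 : MvPolynomial (Fin 4) ℂ) :=
  NS_of_prime (mv_prime_X 0) (not_X_dvd 0 _ (by simp))
lemma NS_c2 : NS (X 2 * X 3 : MvPolynomial (Fin 4) ℂ) :=
  NS_of_prime (mv_prime_X 2) (not_X_dvd 2 _ (by simp))
lemma NS_c12 : NS ((X 0 * X 1) * (X 2 * X 3) : MvPolynomial (Fin 4) ℂ) := by
  have h := NS_of_prime (mv_prime_X 0)
    (not_X_dvd 0 (X 1 * (X 2 * X 3) : MvPolynomial (Fin 4) ℂ) (by simp))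
  rw [show (X 0 * (X 1 * (X 2 * X 3)) : MvPolynomial (Fin 4) ℂ)
      = (X 0 * X 1) * (X 2 * X 3) by ring] at h
  exact h
lemma NS_cu : NS (X 1 * X 2 : MvPolynomial (Fin 3) ℂ) :=
  NS_of_prime (mv_prime_X 1) (not_X_dvd 1 _ (by simp))



abbrev T0 : Type := MvPolynomial (Fin 4) ℂ
noncomputable def c1 : T0 := X 0 * X 1
noncomputable def c2 : T0 := X 2 * X 3
noncomputable abbrev T1 : Type := AdjoinRoot (quad c1)
noncomputable instance instDomT1 : IsDomain T1 := domain_quad NS_c1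
noncomputable def c2' : T1 := AdjoinRoot.of _ c2
noncomputable abbrev T2 : Type := AdjoinRoot (quad c2')
lemma two_ne_T0 : (2 : T0) ≠ 0 := two_ne_zero
noncomputable instance instDomT2 : IsDomain T2 :=
  domain_quad (NS_lift NS_c2 NS_c12 two_ne_T0)

noncomputable def of1 : T0 →+* T1 := AdjoinRoot.of _
noncomputable def of2 : T1 →+* T2 := AdjoinRoot.of _

noncomputable def vT : Fin 6 → T2
  | 0 => of2 (of1 (X 0))
  | 1 => of2 (AdjoinRoot.root (quad c1))
  | 2 => of2 (of1 (X 1))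
  | 3 => of2 (of1 (X 2))
  | 4 => AdjoinRoot.root (quad c2')
  | 5 => of2 (of1 (X 3))

noncomputable def φ : MvPolynomial (Fin 6) ℂ →+* T2 :=
  eval₂Hom (of2.comp (of1.comp MvPolynomial.C)) vT

lemma φ_X (i : Fin 6) : φ (X i) = vT i := eval₂Hom_X' _ _ _

lemma hker : I6 ≤ RingHom.ker φ := by
  rw [I6, Ideal.span_le]
  rintro p (rfl | rfl) <;> rw [SetLike.mem_coe, RingHom.mem_ker, map_sub, map_pow, map_mul]
  · rw [show φ (X 1) = of2 (AdjoinRoot.root (quad c1)) from φ_X 1,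
      show φ (X 0) = of2 (of1 (X 0)) from φ_X 0,
      show φ (X 2) = of2 (of1 (X 1)) from φ_X 2]
    rw [← map_pow, root_sq, ← map_mul, ← map_mul]
    exact sub_self _
  · rw [show φ (X 4) = AdjoinRoot.root (quad c2') from φ_X 4,
      show φ (X 3) = of2 (of1 (X 2)) from φ_X 3,
      show φ (X 5) = of2 (of1 (X 3)) from φ_X 5]
    rw [root_sq, ← map_mul, ← map_mul]
    exact sub_self _

abbrev Q : Type := MvPolynomial (Fin 6) ℂ ⧸ I6
noncomputable def mkQ : MvPolynomial (Fin 6) ℂ →+* Q := Ideal.Quotient.mk I6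

noncomputable def wQ : Fin 4 → Q
  | 0 => mkQ (X 0)
  | 1 => mkQ (X 2)
  | 2 => mkQ (X 3)
  | 3 => mkQ (X 5)

noncomputable def ψ0 : T0 →+* Q := eval₂Hom (mkQ.comp MvPolynomial.C) wQ

lemma ψ0_X (i : Fin 4) : ψ0 (X i) = wQ i := eval₂Hom_X' _ _ _

lemma hψ1 : (quad c1).eval₂ ψ0 (mkQ (X 1)) = 0 := by
  simp only [quad, Polynomial.eval₂_sub, Polynomial.eval₂_pow, Polynomial.eval₂_X,
    Polynomial.eval₂_C]
  rw [show ψ0 c1 = mkQ (X 0) * mkQ (X 2) by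
    rw [show c1 = (X 0 * X 1 : T0) from rfl, map_mul, ψ0_X 0, ψ0_X 1]; rfl]
  rw [show mkQ (X 1) ^ 2 - mkQ (X 0) * mkQ (X 2) = mkQ (X 1 ^ 2 - X 0 * X 2) by
    rw [map_sub, map_pow, map_mul]]
  rw [mkQ, Ideal.Quotient.eq_zero_iff_mem]
  exact Ideal.subset_span (Set.mem_insert _ _)

noncomputable def ψ1 : T1 →+* Q := AdjoinRoot.lift ψ0 (mkQ (X 1)) hψ1

lemma ψ1_of (x : T0) : ψ1 (of1 x) = ψ0 x := AdjoinRoot.lift_of hψ1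
lemma ψ1_root : ψ1 (AdjoinRoot.root (quad c1)) = mkQ (X 1) := AdjoinRoot.lift_root hψ1

lemma hψ2 : (quad c2').eval₂ ψ1 (mkQ (X 4)) = 0 := by
  simp only [quad, Polynomial.eval₂_sub, Polynomial.eval₂_pow, Polynomial.eval₂_X,
    Polynomial.eval₂_C]
  rw [show ψ1 c2' = ψ0 c2 from ψ1_of c2]
  rw [show ψ0 c2 = mkQ (X 3) * mkQ (X 5) by
    rw [show c2 = (X 2 * X 3 : T0) from rfl, map_mul, ψ0_X 2, ψ0_X 3]; rfl]
  rw [show mkQ (X 4) ^ 2 - mkQ (X 3) * mkQ (X 5) = mkQ (X 4 ^ 2 - X 3 * X 5) by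
    rw [map_sub, map_pow, map_mul]]
  rw [mkQ, Ideal.Quotient.eq_zero_iff_mem]
  exact Ideal.subset_span (Set.mem_insert_of_mem _ rfl)

noncomputable def ψ2 : T2 →+* Q := AdjoinRoot.lift ψ1 (mkQ (X 4)) hψ2

lemma ψ2_of (x : T1) : ψ2 (of2 x) = ψ1 x := AdjoinRoot.lift_of hψ2
lemma ψ2_root : ψ2 (AdjoinRoot.root (quad c2')) = mkQ (X 4) := AdjoinRoot.lift_root hψ2

lemma sect : ψ2.comp φ = mkQ := by
  apply MvPolynomial.ringHom_ext
  · intro r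
    rw [RingHom.comp_apply, show φ (MvPolynomial.C r) = of2 (of1 (MvPolynomial.C r)) from
      eval₂Hom_C _ _ _, ψ2_of, ψ1_of, show ψ0 (MvPolynomial.C r) = mkQ (MvPolynomial.C r) from
      eval₂Hom_C _ _ _]
  · intro i
    rw [RingHom.comp_apply, φ_X]
    fin_cases i
    · show ψ2 (vT 0) = mkQ (X 0)
      rw [show vT 0 = of2 (of1 (X 0)) from rfl, ψ2_of, ψ1_of,
        show ψ0 (X 0) = mkQ (X 0) from ψ0_X 0]
    · show ψ2 (vT 1) = mkQ (X 1)
      rw [show vT 1 = of2 (AdjoinRoot.root (quad c1)) from rfl, ψ2_of, ψ1_root]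
    · show ψ2 (vT 2) = mkQ (X 2)
      rw [show vT 2 = of2 (of1 (X 1)) from rfl, ψ2_of, ψ1_of,
        show ψ0 (X 1) = mkQ (X 2) from ψ0_X 1]
    · show ψ2 (vT 3) = mkQ (X 3)
      rw [show vT 3 = of2 (of1 (X 2)) from rfl, ψ2_of, ψ1_of,
        show ψ0 (X 2) = mkQ (X 3) from ψ0_X 2]
    · show ψ2 (vT 4) = mkQ (X 4)
      rw [show vT 4 = AdjoinRoot.root (quad c2') from rfl, ψ2_root]
    · show ψ2 (vT 5) = mkQ (X 5)
      rw [show vT 5 = of2 (of1 (X 3)) from rfl, ψ2_of, ψ1_of,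
        show ψ0 (X 3) = mkQ (X 5) from ψ0_X 3]

noncomputable def φQ : Q →+* T2 :=
  Ideal.Quotient.lift I6 φ (fun a ha => RingHom.mem_ker.mp (hker ha))

lemma φQ_inj : Function.Injective φQ := by
  have key : ∀ q : Q, ψ2 (φQ q) = q := by
    intro q
    obtain ⟨p, rfl⟩ := Ideal.Quotient.mk_surjective q
    have h1 : φQ (Ideal.Quotient.mk I6 p) = φ p := Ideal.Quotient.lift_mk I6 _ _
    rw [h1, ← RingHom.comp_apply, sect]; rfl
  intro x y hxy
  rw [← key x, ← key y, hxy]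

noncomputable instance instDomQ : IsDomain Q := Function.Injective.isDomain φQ φQ_inj


/-! ### Primality of `P12` -/

noncomputable def J6 : Ideal (MvPolynomial (Fin 6) ℂ) := I6 ⊔ Ideal.span {X 0, X 1}

abbrev U0 : Type := MvPolynomial (Fin 3) ℂ
noncomputable def cu : U0 := X 1 * X 2
noncomputable abbrev U1 : Type := AdjoinRoot (quad cu)
noncomputable instance instDomU1 : IsDomain U1 := domain_quad NS_cu
noncomputable def ofu : U0 →+* U1 := AdjoinRoot.of _

noncomputable def vU : Fin 6 → U1
  | 0 => 0
  | 1 => 0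
  | 2 => ofu (X 0)
  | 3 => ofu (X 1)
  | 4 => AdjoinRoot.root (quad cu)
  | 5 => ofu (X 2)

noncomputable def φ' : MvPolynomial (Fin 6) ℂ →+* U1 :=
  eval₂Hom (ofu.comp MvPolynomial.C) vU

lemma φ'_X (i : Fin 6) : φ' (X i) = vU i := eval₂Hom_X' _ _ _

lemma hkerJ : J6 ≤ RingHom.ker φ' := by
  rw [J6, sup_le_iff]
  constructor
  · rw [I6, Ideal.span_le]
    rintro p (rfl | rfl) <;> rw [SetLike.mem_coe, RingHom.mem_ker, map_sub, map_pow, map_mul]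
    · rw [show φ' (X 1) = 0 from φ'_X 1, show φ' (X 0) = 0 from φ'_X 0]
      ring
    · rw [show φ' (X 4) = AdjoinRoot.root (quad cu) from φ'_X 4,
        show φ' (X 3) = ofu (X 1) from φ'_X 3, show φ' (X 5) = ofu (X 2) from φ'_X 5]
      rw [root_sq, ← map_mul]
      exact sub_self _
  · rw [Ideal.span_le]
    rintro p (rfl | rfl) <;> rw [SetLike.mem_coe, RingHom.mem_ker]
    · exact φ'_X 0
    · exact φ'_X 1

abbrev QJ : Type := MvPolynomial (Fin 6) ℂ ⧸ J6
noncomputable def mkJ : MvPolynomial (Fin 6) ℂ →+* QJ := Ideal.Quotient.mk J6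

noncomputable def wJ : Fin 3 → QJ
  | 0 => mkJ (X 2)
  | 1 => mkJ (X 3)
  | 2 => mkJ (X 5)

noncomputable def ψ0' : U0 →+* QJ := eval₂Hom (mkJ.comp MvPolynomial.C) wJ

lemma ψ0'_X (i : Fin 3) : ψ0' (X i) = wJ i := eval₂Hom_X' _ _ _

lemma hψu : (quad cu).eval₂ ψ0' (mkJ (X 4)) = 0 := by
  simp only [quad, Polynomial.eval₂_sub, Polynomial.eval₂_pow, Polynomial.eval₂_X,
    Polynomial.eval₂_C]
  rw [show ψ0' cu = mkJ (X 3) * mkJ (X 5) by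
    rw [show cu = (X 1 * X 2 : U0) from rfl, map_mul, ψ0'_X 1, ψ0'_X 2]; rfl]
  rw [show mkJ (X 4) ^ 2 - mkJ (X 3) * mkJ (X 5) = mkJ (X 4 ^ 2 - X 3 * X 5) by
    rw [map_sub, map_pow, map_mul]]
  rw [mkJ, Ideal.Quotient.eq_zero_iff_mem]
  exact Ideal.mem_sup_left (Ideal.subset_span (Set.mem_insert_of_mem _ rfl))

noncomputable def ψu : U1 →+* QJ := AdjoinRoot.lift ψ0' (mkJ (X 4)) hψu

lemma ψu_of (x : U0) : ψu (ofu x) = ψ0' x := AdjoinRoot.lift_of hψu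
lemma ψu_root : ψu (AdjoinRoot.root (quad cu)) = mkJ (X 4) := AdjoinRoot.lift_root hψu

lemma X0_mem_J6 : (X 0 : MvPolynomial (Fin 6) ℂ) ∈ J6 :=
  Ideal.mem_sup_right (Ideal.subset_span (Set.mem_insert _ _))
lemma X1_mem_J6 : (X 1 : MvPolynomial (Fin 6) ℂ) ∈ J6 :=
  Ideal.mem_sup_right (Ideal.subset_span (Set.mem_insert_of_mem _ rfl))

lemma sectJ : ψu.comp φ' = mkJ := by
  apply MvPolynomial.ringHom_ext
  · intro r
    rw [RingHom.comp_apply, show φ' (MvPolynomial.C r) = ofu (MvPolynomial.C r) from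
      eval₂Hom_C _ _ _, ψu_of, show ψ0' (MvPolynomial.C r) = mkJ (MvPolynomial.C r) from
      eval₂Hom_C _ _ _]
  · intro i
    rw [RingHom.comp_apply, φ'_X]
    fin_cases i
    · show ψu (vU 0) = mkJ (X 0)
      rw [show vU 0 = 0 from rfl, map_zero, mkJ,
        Eq.comm, Ideal.Quotient.eq_zero_iff_mem]
      exact X0_mem_J6
    · show ψu (vU 1) = mkJ (X 1)
      rw [show vU 1 = 0 from rfl, map_zero, mkJ, Eq.comm, Ideal.Quotient.eq_zero_iff_mem]
      exact X1_mem_J6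
    · show ψu (vU 2) = mkJ (X 2)
      rw [show vU 2 = ofu (X 0) from rfl, ψu_of, show ψ0' (X 0) = mkJ (X 2) from ψ0'_X 0]
    · show ψu (vU 3) = mkJ (X 3)
      rw [show vU 3 = ofu (X 1) from rfl, ψu_of, show ψ0' (X 1) = mkJ (X 3) from ψ0'_X 1]
    · show ψu (vU 4) = mkJ (X 4)
      rw [show vU 4 = AdjoinRoot.root (quad cu) from rfl, ψu_root]
    · show ψu (vU 5) = mkJ (X 5)
      rw [show vU 5 = ofu (X 2) from rfl, ψu_of, show ψ0' (X 2) = mkJ (X 5) from ψ0'_X 2]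

noncomputable def φQJ : QJ →+* U1 :=
  Ideal.Quotient.lift J6 φ' (fun a ha => RingHom.mem_ker.mp (hkerJ ha))

lemma φQJ_inj : Function.Injective φQJ := by
  have key : ∀ q : QJ, ψu (φQJ q) = q := by
    intro q
    obtain ⟨p, rfl⟩ := Ideal.Quotient.mk_surjective q
    have h1 : φQJ (Ideal.Quotient.mk J6 p) = φ' p := Ideal.Quotient.lift_mk J6 _ _
    rw [h1, ← RingHom.comp_apply, sectJ]; rfl
  intro x y hxy
  rw [← key x, ← key y, hxy]

noncomputable instance instDomQJ : IsDomain QJ := Function.Injective.isDomain φQJ φQJ_inj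

lemma P12_eq_map : P12 = Ideal.map mkQ (Ideal.span {X 0, X 1}) := by
  rw [Ideal.map_span, Set.image_insert_eq, Set.image_singleton]
  rfl

noncomputable def eQJ : (Q ⧸ P12) ≃+* QJ :=
  (Ideal.quotEquivOfEq P12_eq_map).trans (DoubleQuot.quotQuotEquivQuotSup I6 (Ideal.span {X 0, X 1}))

lemma hP12 : P12.IsPrime := by
  haveI : IsDomain (Q ⧸ P12) := Function.Injective.isDomain eQJ.toRingHom eQJ.injective
  exact (Ideal.Quotient.isDomain_iff_prime P12).mp this


/-! ### Localization -/

lemma X2_not_mem_J6' : (X 2 : MvPolynomial (Fin 6) ℂ) ∉ Ideal.span {X 0, X 1} ⊔ I6 := by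
  intro h
  set ev : MvPolynomial (Fin 6) ℂ →+* ℂ :=
    (eval (fun j => if j = 2 then 1 else 0) : MvPolynomial (Fin 6) ℂ →+* ℂ) with hev
  have hker : Ideal.span {X 0, X 1} ⊔ I6 ≤ RingHom.ker ev := by
    rw [sup_le_iff]
    constructor
    · rw [Ideal.span_le]
      rintro p (rfl | rfl) <;> rw [SetLike.mem_coe, RingHom.mem_ker] <;> simp [hev]
    · rw [I6, Ideal.span_le]
      rintro p (rfl | rfl) <;> rw [SetLike.mem_coe, RingHom.mem_ker] <;> simp [hev]
  have h1 : ev (X 2) = 0 := hker h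
  rw [hev] at h1
  simp at h1

lemma X2_not_mem_P12 : mkQ (X 2) ∉ P12 := by
  rw [P12_eq_map, mkQ]
  intro h
  exact X2_not_mem_J6' (Ideal.mem_quotient_iff_mem_sup.mp h)

lemma X1_not_zero_Q : mkQ (X 1) ≠ 0 := by
  rw [mkQ, Ne, Ideal.Quotient.eq_zero_iff_mem]
  intro h
  set ev : MvPolynomial (Fin 6) ℂ →+* ℂ :=
    (eval (fun j => if j ≤ 2 then 1 else 0) : MvPolynomial (Fin 6) ℂ →+* ℂ) with hev
  have hker : I6 ≤ RingHom.ker ev := by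
    rw [I6, Ideal.span_le]
    rintro p (rfl | rfl) <;> rw [SetLike.mem_coe, RingHom.mem_ker] <;> simp [hev]
  have h1 : ev (X 1) = 0 := hker h
  rw [hev] at h1
  simp at h1

section Loc

attribute [local instance] hP12

abbrev Loc : Type := Localization.AtPrime P12

noncomputable def al : Q →+* Loc := algebraMap Q Loc

lemma hle : P12.primeCompl ≤ nonZeroDivisors Q := P12.primeCompl_le_nonZeroDivisors

noncomputable instance instDomLoc : IsDomain Loc :=
  IsLocalization.isDomain_localization hle

lemma hmax : Ideal.map al P12 = IsLocalRing.maximalIdeal Loc :=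
  Localization.AtPrime.map_eq_maximalIdeal

noncomputable def tL : Loc := al (mkQ (X 1))

lemma htne : tL ≠ 0 := by
  intro h
  exact X1_not_zero_Q ((IsLocalization.injective Loc hle) (by rw [← map_zero al] at h; exact h))

lemma hunit3 : IsUnit (al (mkQ (X 2))) :=
  IsLocalization.map_units (M := P12.primeCompl) Loc ⟨mkQ (X 2), X2_not_mem_P12⟩

lemma hrel : tL ^ 2 = al (mkQ (X 0)) * al (mkQ (X 2)) := by
  rw [tL, ← map_pow, ← map_mul, ← map_pow, ← map_mul]
  congr 1
  rw [mkQ, Ideal.Quotient.eq]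
  exact Ideal.subset_span (Set.mem_insert _ _)

lemma ht_mem : tL ∈ IsLocalRing.maximalIdeal Loc := by
  rw [← hmax]
  exact Ideal.mem_map_of_mem al (Ideal.subset_span (Set.mem_insert_of_mem _ rfl))

lemma ht_nonunit : ¬ IsUnit tL := fun h => (IsLocalRing.mem_maximalIdeal tL).mp ht_mem h

lemma hx0' : ∃ u : Locˣ, (↑u : Loc) = al (mkQ (X 2)) ∧ al (mkQ (X 0)) = tL * (tL * ↑u⁻¹) := by
  obtain ⟨u, hu⟩ := hunit3
  refine ⟨u, hu, ?_⟩
  have h2 : al (mkQ (X 0)) * ↑u = tL * tL := by rw [hu, ← hrel, pow_two]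
  calc al (mkQ (X 0)) = al (mkQ (X 0)) * ↑u * ↑u⁻¹ := by
        rw [mul_assoc, Units.mul_inv, mul_one]
    _ = tL * tL * ↑u⁻¹ := by rw [h2]
    _ = tL * (tL * ↑u⁻¹) := by ring

lemma hspan : IsLocalRing.maximalIdeal Loc = Ideal.span {tL} := by
  obtain ⟨u, hu, hx0⟩ := hx0'
  refine le_antisymm ?_ ?_
  · rw [← hmax, Ideal.map_le_iff_le_comap]
    show Ideal.span {mkQ (X 0), mkQ (X 1)} ≤ _
    rw [Ideal.span_le]
    rintro x (rfl | rfl) <;> rw [SetLike.mem_coe, Ideal.mem_comap]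
    · exact Ideal.mem_span_singleton.mpr ⟨tL * ↑u⁻¹, hx0⟩
    · exact Ideal.mem_span_singleton.mpr (dvd_refl tL)
  · rw [Ideal.span_le, Set.singleton_subset_iff]
    exact ht_mem

lemma not_field_Loc : ¬ IsField Loc := by
  intro h
  have hbot : IsLocalRing.maximalIdeal Loc = ⊥ :=
    IsLocalRing.isField_iff_maximalIdeal_eq.mp h
  exact htne (by simpa [hbot] using ht_mem)

noncomputable instance instNoethLoc : IsNoetherianRing Loc :=
  IsLocalization.isNoetherianRing P12.primeCompl Loc inferInstance

lemma hDVR : IsDiscreteValuationRing Loc := by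
  have hPr : (IsLocalRing.maximalIdeal Loc).IsPrincipal := ⟨⟨tL, hspan⟩⟩
  exact ((IsDiscreteValuationRing.TFAE Loc not_field_Loc).out 0 4).mpr hPr

lemma not_mem_sq : tL ∉ IsLocalRing.maximalIdeal Loc ^ 2 := by
  rw [hspan, Ideal.span_singleton_pow, Ideal.mem_span_singleton]
  rintro ⟨r, hr⟩
  apply ht_nonunit
  have h1 : tL * 1 = tL * (tL * r) := by
    rw [mul_one]
    conv_lhs => rw [hr]
    ring
  have h2 : (1 : Loc) = tL * r := mul_left_cancel₀ htne h1
  exact IsUnit.of_mul_eq_one _ h2.symm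

lemma mem_sq : al (mkQ (X 0)) ∈ IsLocalRing.maximalIdeal Loc ^ 2 := by
  obtain ⟨u, hu, hx0⟩ := hx0'
  rw [hspan, Ideal.span_singleton_pow, Ideal.mem_span_singleton]
  refine ⟨(↑u⁻¹ : Loc), ?_⟩
  rw [hx0]; ring

lemma not_mem_cube : al (mkQ (X 0)) ∉ IsLocalRing.maximalIdeal Loc ^ 3 := by
  obtain ⟨u, hu, hx0⟩ := hx0'
  rw [hspan, Ideal.span_singleton_pow, Ideal.mem_span_singleton]
  rintro ⟨r, hr⟩
  apply ht_nonunit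
  have e1 : al (mkQ (X 0)) = tL ^ 2 * ↑u⁻¹ := by rw [hx0]; ring
  have h1 : tL ^ 2 * ↑u⁻¹ = tL ^ 2 * (tL * r) := by
    rw [← e1, hr]; ring
  have h2 : (↑u⁻¹ : Loc) = tL * r := mul_left_cancel₀ (pow_ne_zero 2 htne) h1
  exact isUnit_of_mul_isUnit_left (h2 ▸ (u⁻¹).isUnit)

end Loc


end Stmt12Aux

/-- `P` is prime, the localization `R_P` is a discrete valuation ring,
the image of `x₂` lies in the maximal ideal `m` of `R_P` but not in `m²`, and the
image of `x₁` lies in `m²` but not in `m³`. -/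
theorem stmt_12 :
    ∃ hP : P12.IsPrime,
      haveI := hP
      ∃ hdom : IsDomain (Localization.AtPrime P12),
        haveI := hdom
        IsDiscreteValuationRing (Localization.AtPrime P12) ∧
        algebraMap _ (Localization.AtPrime P12) (Ideal.Quotient.mk I6 (X 1)) ∈
          IsLocalRing.maximalIdeal (Localization.AtPrime P12) ∧
        algebraMap _ (Localization.AtPrime P12) (Ideal.Quotient.mk I6 (X 1)) ∉
          IsLocalRing.maximalIdeal (Localization.AtPrime P12) ^ 2 ∧
        algebraMap _ (Localization.AtPrime P12) (Ideal.Quotient.mk I6 (X 0)) ∈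
          IsLocalRing.maximalIdeal (Localization.AtPrime P12) ^ 2 ∧
        algebraMap _ (Localization.AtPrime P12) (Ideal.Quotient.mk I6 (X 0)) ∉
          IsLocalRing.maximalIdeal (Localization.AtPrime P12) ^ 3 :=
  ⟨Stmt12Aux.hP12, Stmt12Aux.instDomLoc, Stmt12Aux.hDVR, Stmt12Aux.ht_mem,
    Stmt12Aux.not_mem_sq, Stmt12Aux.mem_sq, Stmt12Aux.not_mem_cube⟩
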